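/- In a linear P-SCM X = A X + B S with A strictly lower triangular, where B has the block form B = [A_{ol} | I] (each observed variable has a distinct source), and under the faithfulness assumption that the support of W = (I−A)⁻¹B satisfies: if there is a directed path from x_i to x_j in the graph of A then supp(W_i) ⊆ supp(W_j) and no cancellation occurs — then for each k, the set {i : supp(W_i) ⊊ supp(W_k)} equals the set of ancestors of x_k in the DAG of A. -/

import Mathlib

open Matrix

/-- In a linear DS-P-SCM (each observed variable has a distinct source,
`B = [A_ol | I]`), under faithfulness (ancestors' supports are contained in
descendants' supports) and genericity (a nonzero entry of `(I-A)⁻¹` off the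
diagonal witnesses a directed path), the possible parent set
`{i : supp(Wᵢ) ⊊ supp(W_k)}` is exactly the ancestor set of `x_k`. -/
theorem stmt_15 (p m : ℕ) (A : Matrix (Fin p) (Fin p) ℝ)
    (hA : ∀ i j : Fin p, i ≤ j → A i j = 0)
    (Aol : Matrix (Fin p) (Fin m) ℝ)
    (B : Matrix (Fin p) (Fin m ⊕ Fin p) ℝ)
    (hB : B = Matrix.fromCols Aol (1 : Matrix (Fin p) (Fin p) ℝ))
    (W : Matrix (Fin p) (Fin m ⊕ Fin p) ℝ) (hW : W = (1 - A)⁻¹ * B)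
    (hfaith : ∀ i j : Fin p,
      Relation.TransGen (fun a b : Fin p => A b a ≠ 0) i j →
      {c : Fin m ⊕ Fin p | W i c ≠ 0} ⊆ {c | W j c ≠ 0})
    (hgen : ∀ i k : Fin p, i ≠ k → (1 - A)⁻¹ k i ≠ 0 →
      Relation.TransGen (fun a b : Fin p => A b a ≠ 0) i k) :
    ∀ k : Fin p,
      {i : Fin p | {c : Fin m ⊕ Fin p | W i c ≠ 0} ⊂ {c | W k c ≠ 0}} =
        {i : Fin p | Relation.TransGen (fun a b : Fin p => A b a ≠ 0) i k} := by
  set M : Matrix (Fin p) (Fin p) ℝ := 1 - A with hM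
  -- M is lower triangular (BlockTriangular with toDual)
  have hMtri : M.BlockTriangular OrderDual.toDual := by
    intro i j hij
    have hij' : (i : Fin p) < j := hij
    simp [hM, Matrix.sub_apply, Matrix.one_apply, hij'.ne, hA i j hij'.le]
  have hdiag : ∀ i, M i i = 1 := by
    intro i
    simp [hM, Matrix.sub_apply, Matrix.one_apply, hA i i le_rfl]
  have hdet : M.det = 1 := by
    rw [Matrix.det_of_lowerTriangular M hMtri]
    simp [hdiag]
  have : Invertible M := M.invertibleOfIsUnitDet (by rw [hdet]; exact isUnit_one)
  have hinvtri : M⁻¹.BlockTriangular OrderDual.toDual :=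
    Matrix.blockTriangular_inv_of_blockTriangular hMtri
  have hinvlow : ∀ i j : Fin p, i < j → M⁻¹ i j = 0 := fun i j h => hinvtri h
  -- diagonal of the inverse is 1
  have hinvdiag : ∀ i : Fin p, M⁻¹ i i = 1 := by
    intro i
    have h1 : (M * M⁻¹) i i = 1 := by
      rw [Matrix.mul_nonsing_inv M (by rw [hdet]; exact isUnit_one)]
      simp [Matrix.one_apply]
    rw [Matrix.mul_apply] at h1
    rw [Finset.sum_eq_single i] at h1
    · rwa [hdiag, one_mul] at h1
    · intro j _ hji
      rcases lt_or_gt_of_ne hji with h | h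
      · rw [hinvlow j i h, mul_zero]
      · have : M i j = 0 := hMtri h
        rw [this, zero_mul]
    · intro h; exact absurd (Finset.mem_univ i) h
  -- W entries at inr columns are entries of M⁻¹
  have hWinr : ∀ k i : Fin p, W k (Sum.inr i) = M⁻¹ k i := by
    intro k i
    rw [hW, hB, Matrix.mul_fromCols, Matrix.fromCols_apply_inr, Matrix.mul_one]
  -- an edge means strict increase
  have hpath_lt : ∀ i k : Fin p,
      Relation.TransGen (fun a b : Fin p => A b a ≠ 0) i k → i < k := by
    intro i k h
    induction h with
    | single h =>
        by_contra hc
        exact h (hA _ _ (not_lt.mp hc))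
    | tail _ h ih =>
        refine lt_trans ih ?_
        by_contra hc
        exact h (hA _ _ (not_lt.mp hc))
  intro k
  ext i
  simp only [Set.mem_setOf_eq]
  constructor
  · intro hss
    have hne : i ≠ k := by
      rintro rfl; exact (ne_of_ssubset hss) rfl
    have hmem : Sum.inr i ∈ {c : Fin m ⊕ Fin p | W i c ≠ 0} := by
      simp only [Set.mem_setOf_eq, hWinr, hinvdiag]
      exact one_ne_zero
    have : W k (Sum.inr i) ≠ 0 := hss.subset hmem
    rw [hWinr] at this
    exact hgen i k hne this
  · intro hpath
    have hsub := hfaith i k hpath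
    rw [Set.ssubset_def]
    refine ⟨hsub, fun hle => ?_⟩
    have hk : Sum.inr k ∈ {c : Fin m ⊕ Fin p | W k c ≠ 0} := by
      simp only [Set.mem_setOf_eq, hWinr, hinvdiag]
      exact one_ne_zero
    have := hle hk
    simp only [Set.mem_setOf_eq, hWinr] at this
    exact this (hinvlow i k (hpath_lt i k hpath))
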